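/- Every element of the 3-fusible numbers F₃ = F({g₃},{0}), where g₃(x,y,z) = (x+y+z+1)/3, is a rational number whose denominator in lowest terms is a power of 3; consequently 1/2 ∉ F₃, yet 1/2 is a limit point of F₃ since the numbers aₙ = (1 − 3^{-n})/2 belong to F₃ for all n ∈ ℕ and converge to 1/2. In particular, F₃ is not a closed subset of ℝ. -/

import Mathlib

inductive FusibleN (n : ℕ) : ℝ → Prop
  | zero : FusibleN n 0
  | step (x : Fin n → ℝ) : (∀ j, FusibleN n (x j)) →
      (∀ j, x j < (∑ j, x j + 1) / n) → FusibleN n ((∑ j, x j + 1) / n)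

private lemma pow3_add (x y : ℝ) (hx : ∃ (a : ℤ) (k : ℕ), x = (a : ℝ) / 3 ^ k)
    (hy : ∃ (a : ℤ) (k : ℕ), y = (a : ℝ) / 3 ^ k) :
    ∃ (a : ℤ) (k : ℕ), x + y = (a : ℝ) / 3 ^ k := by
  obtain ⟨a, k, rfl⟩ := hx
  obtain ⟨b, l, rfl⟩ := hy
  refine ⟨a * 3 ^ l + b * 3 ^ k, k + l, ?_⟩
  push_cast
  field_simp
  ring

private lemma fusible3_pow3 (x : ℝ) (h : FusibleN 3 x) :
    ∃ (a : ℤ) (k : ℕ), x = (a : ℝ) / 3 ^ k := by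
  induction h with
  | zero => exact ⟨0, 0, by norm_num⟩
  | step x h hlt ih =>
    have hsum : ∃ (a : ℤ) (k : ℕ), (∑ j, x j) = (a : ℝ) / 3 ^ k := by
      rw [Fin.sum_univ_three]
      exact pow3_add _ _ (pow3_add _ _ (ih 0) (ih 1)) (ih 2)
    obtain ⟨a, k, hs⟩ := hsum
    refine ⟨a + 3 ^ k, k + 1, ?_⟩
    rw [hs]
    push_cast
    field_simp
    ring

private lemma fusible3_seq (m : ℕ) : FusibleN 3 ((1 - ((3 : ℝ)⁻¹) ^ m) / 2) := by
  induction m with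
  | zero => simpa using FusibleN.zero
  | succ m ih =>
    have key : (1 - ((3 : ℝ)⁻¹) ^ (m + 1)) / 2
        = ((∑ j, (![(1 - ((3 : ℝ)⁻¹) ^ m) / 2, 0, 0]) j) + 1) / 3 := by
      rw [Fin.sum_univ_three]
      simp only [Matrix.cons_val_zero, Matrix.cons_val_one, Matrix.head_cons,
        Matrix.cons_val_two, Matrix.tail_cons]
      have h3 : ((3:ℝ)⁻¹) ^ (m+1) = ((3:ℝ)⁻¹) ^ m / 3 := by
        rw [pow_succ]; ring
      rw [h3]; ring
    rw [key]
    have hpos : (0:ℝ) < ((∑ j, (![(1 - ((3 : ℝ)⁻¹) ^ m) / 2, 0, 0]) j) + 1) / 3 := by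
      rw [← key]
      have : ((3:ℝ)⁻¹) ^ (m+1) < 1 := by
        apply pow_lt_one₀ <;> norm_num
      linarith
    have hlt : (1 - ((3 : ℝ)⁻¹) ^ m) / 2
        < ((∑ j, (![(1 - ((3 : ℝ)⁻¹) ^ m) / 2, 0, 0]) j) + 1) / 3 := by
      rw [← key]
      have : ((3:ℝ)⁻¹) ^ (m+1) < ((3:ℝ)⁻¹) ^ m := by
        apply pow_lt_pow_right_of_lt_one₀ <;> norm_num
      linarith
    refine FusibleN.step _ (fun j => ?_) (fun j => ?_) <;> fin_cases j <;>
      simp only [Matrix.cons_val_zero, Matrix.cons_val_one, Matrix.head_cons,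
        Matrix.cons_val_two, Matrix.tail_cons]
    · exact ih
    · exact FusibleN.zero
    · exact FusibleN.zero
    · exact_mod_cast hlt
    · exact_mod_cast hpos
    · exact_mod_cast hpos

theorem fusible3_not_closed :
    (∀ x : ℝ, FusibleN 3 x → ∃ (a : ℤ) (k : ℕ), x = (a : ℝ) / 3 ^ k) ∧
    ¬ FusibleN 3 (1 / 2) ∧
    (∀ m : ℕ, FusibleN 3 ((1 - ((3 : ℝ)⁻¹) ^ m) / 2)) ∧
    Filter.Tendsto (fun m : ℕ => (1 - ((3 : ℝ)⁻¹) ^ m) / 2)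
      Filter.atTop (nhds (1 / 2)) ∧
    (1 : ℝ) / 2 ∈ closure {x : ℝ | FusibleN 3 x} ∧
    ¬ IsClosed {x : ℝ | FusibleN 3 x} := by
  have hhalf : ¬ FusibleN 3 (1 / 2) := by
    intro h
    obtain ⟨a, k, hak⟩ := fusible3_pow3 _ h
    have h3k : ((3:ℤ) ^ k : ℝ) = ((2 * a : ℤ) : ℝ) := by
      push_cast
      have : (3:ℝ) ^ k ≠ 0 := by positivity
      field_simp at hak
      linarith
    have h3k' : (3:ℤ) ^ k = 2 * a := by exact_mod_cast h3k
    have hodd : Odd ((3:ℤ) ^ k) := Odd.pow (by decide)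
    rw [h3k'] at hodd
    exact (Int.not_odd_iff_even.mpr ⟨a, by ring⟩) hodd
  have htend : Filter.Tendsto (fun m : ℕ => (1 - ((3 : ℝ)⁻¹) ^ m) / 2)
      Filter.atTop (nhds (1 / 2)) := by
    have h0 : Filter.Tendsto (fun m : ℕ => ((3:ℝ)⁻¹) ^ m) Filter.atTop (nhds 0) :=
      tendsto_pow_atTop_nhds_zero_of_lt_one (by norm_num) (by norm_num)
    have := ((tendsto_const_nhds (x := (1:ℝ))).sub h0).div_const 2
    simpa using this
  have hclos : (1 : ℝ) / 2 ∈ closure {x : ℝ | FusibleN 3 x} :=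
    mem_closure_of_tendsto htend (Filter.Eventually.of_forall fun m => fusible3_seq m)
  exact ⟨fusible3_pow3, hhalf, fusible3_seq, htend, hclos, fun hc =>
    hhalf (hc.closure_subset hclos)⟩
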